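/- Let f : [0,1] → ℝ be the tent map f(t) = 2t for t ≤ 1/2 and f(t) = 2(1−t) for t ≥ 1/2, let H be the operator sending w to (Hw)(t) = w(2t) for t ≤ 1/2 and −w(2t−1) for t ≥ 1/2, and define h(x) = ∫₀ˣ ((x−t)⁵/5!) (H⁵f)(t) dt for x ∈ [0,1]. Then h is C⁶ on [0,1], h⁽ʲ⁾(1) = 0 for every integer 1 ≤ j ≤ 6, and h(1) = 2^{−21}. -/

import Mathlib

/-- The operator `H`: `(Hw)(t) = w(2t)` for `t ≤ 1/2` and `(Hw)(t) = -w(2t-1)` for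
`t ≥ 1/2`. -/
noncomputable def Hop (w : ℝ → ℝ) : ℝ → ℝ :=
  fun t => if t ≤ 1 / 2 then w (2 * t) else -w (2 * t - 1)

/-- The tent map: `f(t) = 2t` for `t ≤ 1/2` and `f(t) = 2(1-t)` for `t ≥ 1/2`. -/
noncomputable def tent : ℝ → ℝ :=
  fun t => if t ≤ 1 / 2 then 2 * t else 2 * (1 - t)

/-- `h(x) = ∫₀ˣ ((x-t)⁵/5!) (H⁵f)(t) dt`. -/
noncomputable def hFun : ℝ → ℝ :=
  fun x => ∫ t in (0 : ℝ)..x, ((x - t) ^ 5 / 120) * (Hop^[5] tent) t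

open intervalIntegral MeasureTheory Set

lemma tent_cont : Continuous tent := by
  apply Continuous.if_le (by fun_prop) (by fun_prop) continuous_id continuous_const
  intro x hx; simp only [id_eq] at hx; subst hx; norm_num

lemma Hop_cont {w : ℝ → ℝ} (hw : Continuous w) (h0 : w 0 = 0) (h1 : w 1 = 0) :
    Continuous (Hop w) := by
  apply Continuous.if_le (by fun_prop) (by fun_prop) continuous_id continuous_const
  intro x hx; simp only [id_eq] at hx; subst hx; norm_num [h0, h1]

lemma W_props (n : ℕ) :
    Continuous (Hop^[n] tent) ∧ (Hop^[n] tent) 0 = 0 ∧ (Hop^[n] tent) 1 = 0 := by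
  induction n with
  | zero => exact ⟨tent_cont, by norm_num [tent], by norm_num [tent]⟩
  | succ n ih =>
    obtain ⟨hc, h0, h1⟩ := ih
    rw [Function.iterate_succ_apply']
    refine ⟨Hop_cont hc h0 h1, ?_, ?_⟩
    · simp [Hop, h0]
    · norm_num [Hop, h1]

lemma red {w : ℝ → ℝ} (hw : Continuous w) (h0 : w 0 = 0) (h1 : w 1 = 0)
    (p : ℝ → ℝ) (hp : Continuous p) :
    (∫ t in (0:ℝ)..1, p t * Hop w t)
      = (1/2) * ∫ s in (0:ℝ)..1, (p (s/2) - p ((s+1)/2)) * w s := by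
  have hHc : Continuous (Hop w) := Hop_cont hw h0 h1
  have i1 : IntervalIntegrable (fun t => p t * Hop w t) volume 0 (1/2) :=
    (hp.mul hHc).intervalIntegrable _ _
  have i2 : IntervalIntegrable (fun t => p t * Hop w t) volume (1/2) 1 :=
    (hp.mul hHc).intervalIntegrable _ _
  rw [← integral_add_adjacent_intervals i1 i2]
  have e1 : (∫ t in (0:ℝ)..(1/2), p t * Hop w t)
      = ∫ t in (0:ℝ)..(1/2), (fun s => p (s/2) * w s) (2*t) := by
    apply integral_congr
    intro t ht
    rw [Set.uIcc_of_le (by norm_num : (0:ℝ) ≤ 1/2)] at ht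
    simp only [Hop, if_pos ht.2]
    norm_num
  have e2 : (∫ t in (1/2:ℝ)..1, p t * Hop w t)
      = -∫ t in (1/2:ℝ)..1, (fun s => p ((s+1)/2) * w s) (2*t + -1) := by
    rw [← intervalIntegral.integral_neg]
    apply integral_congr
    intro t ht
    rw [Set.uIcc_of_le (by norm_num : (1/2:ℝ) ≤ 1)] at ht
    simp only [Hop]
    by_cases hc : t ≤ 1/2
    · have htt : t = 1/2 := le_antisymm hc ht.1
      subst htt
      rw [if_pos le_rfl]
      norm_num [h0, h1]
    · rw [if_neg hc]
      have : (2*t + -1 + 1)/2 = t := by ring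
      rw [this]
      ring_nf
  rw [e1, e2, integral_comp_mul_left (fun s => p (s/2) * w s) two_ne_zero,
    integral_comp_mul_add (fun s => p ((s+1)/2) * w s) two_ne_zero (-1)]
  norm_num
  rw [show (∫ s in (0:ℝ)..1, (p (s/2) - p ((s+1)/2)) * w s)
      = ∫ s in (0:ℝ)..1, (p (s/2) * w s - p ((s+1)/2) * w s) from
    integral_congr (fun s _ => by ring)]
  rw [integral_sub ((by fun_prop : Continuous fun s => p (s/2) * w s).intervalIntegrable _ _)
      ((by fun_prop : Continuous fun s => p ((s+1)/2) * w s).intervalIntegrable _ _)]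
  ring
lemma comb {w : ℝ → ℝ} (hw : Continuous w) (a b c0 c1 c2 c3 c4 c5 : ℝ) :
    (∫ t in a..b, (c0*t^0 + c1*t^1 + c2*t^2 + c3*t^3 + c4*t^4 + c5*t^5) * w t)
      = c0*(∫ t in a..b, t^0 * w t) + c1*(∫ t in a..b, t^1 * w t)
        + c2*(∫ t in a..b, t^2 * w t) + c3*(∫ t in a..b, t^3 * w t)
        + c4*(∫ t in a..b, t^4 * w t) + c5*(∫ t in a..b, t^5 * w t) := by
  have ii : ∀ k : ℕ, IntervalIntegrable (fun t => t^k * w t) volume a b :=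
    fun k => ((continuous_pow k).mul hw).intervalIntegrable _ _
  have ic : ∀ c : ℝ, ∀ k : ℕ, IntervalIntegrable (fun t => c * (t^k * w t)) volume a b :=
    fun c k => (continuous_const.mul ((continuous_pow k).mul hw)).intervalIntegrable _ _
  rw [show (fun t => (c0*t^0 + c1*t^1 + c2*t^2 + c3*t^3 + c4*t^4 + c5*t^5) * w t)
      = fun t => c0*(t^0*w t) + (c1*(t^1*w t) + (c2*(t^2*w t) + (c3*(t^3*w t)
        + (c4*(t^4*w t) + c5*(t^5*w t))))) from funext fun t => by ring]
  rw [integral_add (ic c0 0) (((ic c1 1).add ((ic c2 2).add ((ic c3 3).add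
      ((ic c4 4).add (ic c5 5))))))]
  rw [integral_add (ic c1 1) ((ic c2 2).add ((ic c3 3).add ((ic c4 4).add (ic c5 5))))]
  rw [integral_add (ic c2 2) ((ic c3 3).add ((ic c4 4).add (ic c5 5)))]
  rw [integral_add (ic c3 3) ((ic c4 4).add (ic c5 5))]
  rw [integral_add (ic c4 4) (ic c5 5)]
  simp only [intervalIntegral.integral_const_mul]
  ring
lemma rec0 {w : ℝ → ℝ} (hw : Continuous w) (h0 : w 0 = 0) (h1 : w 1 = 0) :
    (∫ t in (0:ℝ)..1, t^0 * Hop w t) = 0 := by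
  have h := red hw h0 h1 (fun _ => (1:ℝ)) continuous_const
  rw [show (∫ t in (0:ℝ)..1, t^0 * Hop w t) = ∫ t in (0:ℝ)..1, 1 * Hop w t from
    integral_congr (fun t _ => by norm_num), h]
  simp

lemma rec1 {w : ℝ → ℝ} (hw : Continuous w) (h0 : w 0 = 0) (h1 : w 1 = 0) :
    (∫ t in (0:ℝ)..1, t^1 * Hop w t) = -(1/4)*(∫ t in (0:ℝ)..1, t^0 * w t) := by
  have h := red hw h0 h1 (fun t => t^1) (by fun_prop)
  rw [h, show (∫ s in (0:ℝ)..1, ((s/2)^1 - ((s+1)/2)^1) * w s)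
      = ∫ s in (0:ℝ)..1, ((-(1/2))*s^0 + 0*s^1 + 0*s^2 + 0*s^3 + 0*s^4 + 0*s^5) * w s from
    integral_congr (fun s _ => by ring), comb hw]
  ring

lemma rec2 {w : ℝ → ℝ} (hw : Continuous w) (h0 : w 0 = 0) (h1 : w 1 = 0) :
    (∫ t in (0:ℝ)..1, t^2 * Hop w t)
      = -(1/4)*(∫ t in (0:ℝ)..1, t^1 * w t) - (1/8)*(∫ t in (0:ℝ)..1, t^0 * w t) := by
  have h := red hw h0 h1 (fun t => t^2) (by fun_prop)
  rw [h, show (∫ s in (0:ℝ)..1, ((s/2)^2 - ((s+1)/2)^2) * w s)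
      = ∫ s in (0:ℝ)..1, ((-(1/4))*s^0 + (-(1/2))*s^1 + 0*s^2 + 0*s^3 + 0*s^4 + 0*s^5) * w s from
    integral_congr (fun s _ => by ring), comb hw]
  ring

lemma rec3 {w : ℝ → ℝ} (hw : Continuous w) (h0 : w 0 = 0) (h1 : w 1 = 0) :
    (∫ t in (0:ℝ)..1, t^3 * Hop w t)
      = -(3/16)*(∫ t in (0:ℝ)..1, t^2 * w t) - (3/16)*(∫ t in (0:ℝ)..1, t^1 * w t)
        - (1/16)*(∫ t in (0:ℝ)..1, t^0 * w t) := by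
  have h := red hw h0 h1 (fun t => t^3) (by fun_prop)
  rw [h, show (∫ s in (0:ℝ)..1, ((s/2)^3 - ((s+1)/2)^3) * w s)
      = ∫ s in (0:ℝ)..1, ((-(1/8))*s^0 + (-(3/8))*s^1 + (-(3/8))*s^2 + 0*s^3 + 0*s^4 + 0*s^5) * w s from
    integral_congr (fun s _ => by ring), comb hw]
  ring

lemma rec4 {w : ℝ → ℝ} (hw : Continuous w) (h0 : w 0 = 0) (h1 : w 1 = 0) :
    (∫ t in (0:ℝ)..1, t^4 * Hop w t)
      = -(1/8)*(∫ t in (0:ℝ)..1, t^3 * w t) - (3/16)*(∫ t in (0:ℝ)..1, t^2 * w t)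
        - (1/8)*(∫ t in (0:ℝ)..1, t^1 * w t) - (1/32)*(∫ t in (0:ℝ)..1, t^0 * w t) := by
  have h := red hw h0 h1 (fun t => t^4) (by fun_prop)
  rw [h, show (∫ s in (0:ℝ)..1, ((s/2)^4 - ((s+1)/2)^4) * w s)
      = ∫ s in (0:ℝ)..1, ((-(1/16))*s^0 + (-(1/4))*s^1 + (-(3/8))*s^2 + (-(1/4))*s^3 + 0*s^4 + 0*s^5) * w s from
    integral_congr (fun s _ => by ring), comb hw]
  ring

lemma rec5 {w : ℝ → ℝ} (hw : Continuous w) (h0 : w 0 = 0) (h1 : w 1 = 0) :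
    (∫ t in (0:ℝ)..1, t^5 * Hop w t)
      = -(5/64)*(∫ t in (0:ℝ)..1, t^4 * w t) - (5/32)*(∫ t in (0:ℝ)..1, t^3 * w t)
        - (5/32)*(∫ t in (0:ℝ)..1, t^2 * w t) - (5/64)*(∫ t in (0:ℝ)..1, t^1 * w t)
        - (1/64)*(∫ t in (0:ℝ)..1, t^0 * w t) := by
  have h := red hw h0 h1 (fun t => t^5) (by fun_prop)
  rw [h, show (∫ s in (0:ℝ)..1, ((s/2)^5 - ((s+1)/2)^5) * w s)
      = ∫ s in (0:ℝ)..1, ((-(1/32))*s^0 + (-(5/32))*s^1 + (-(5/16))*s^2 + (-(5/16))*s^3 + (-(5/32))*s^4 + 0*s^5) * w s from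
    integral_congr (fun s _ => by ring), comb hw]
  ring
noncomputable def Mnt (n i : ℕ) : ℝ := ∫ t in (0:ℝ)..1, t^i * (Hop^[n] tent) t

lemma Mnt_rec0 (n : ℕ) : Mnt (n+1) 0 = 0 := by
  obtain ⟨hc, h0, h1⟩ := W_props n
  unfold Mnt
  rw [Function.iterate_succ_apply']
  exact rec0 hc h0 h1

lemma Mnt_rec1 (n : ℕ) : Mnt (n+1) 1 = -(1/4)*Mnt n 0 := by
  obtain ⟨hc, h0, h1⟩ := W_props n
  unfold Mnt
  rw [Function.iterate_succ_apply']
  exact rec1 hc h0 h1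

lemma Mnt_rec2 (n : ℕ) : Mnt (n+1) 2 = -(1/4)*Mnt n 1 - (1/8)*Mnt n 0 := by
  obtain ⟨hc, h0, h1⟩ := W_props n
  unfold Mnt
  rw [Function.iterate_succ_apply']
  exact rec2 hc h0 h1

lemma Mnt_rec3 (n : ℕ) :
    Mnt (n+1) 3 = -(3/16)*Mnt n 2 - (3/16)*Mnt n 1 - (1/16)*Mnt n 0 := by
  obtain ⟨hc, h0, h1⟩ := W_props n
  unfold Mnt
  rw [Function.iterate_succ_apply']
  exact rec3 hc h0 h1

lemma Mnt_rec4 (n : ℕ) :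
    Mnt (n+1) 4 = -(1/8)*Mnt n 3 - (3/16)*Mnt n 2 - (1/8)*Mnt n 1 - (1/32)*Mnt n 0 := by
  obtain ⟨hc, h0, h1⟩ := W_props n
  unfold Mnt
  rw [Function.iterate_succ_apply']
  exact rec4 hc h0 h1

lemma Mnt_rec5 (n : ℕ) :
    Mnt (n+1) 5 = -(5/64)*Mnt n 4 - (5/32)*Mnt n 3 - (5/32)*Mnt n 2 - (5/64)*Mnt n 1
      - (1/64)*Mnt n 0 := by
  obtain ⟨hc, h0, h1⟩ := W_props n
  unfold Mnt
  rw [Function.iterate_succ_apply']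
  exact rec5 hc h0 h1

lemma Mnt00 : Mnt 0 0 = 1/2 := by
  have hT : Continuous fun t : ℝ => t^0 * tent t := by
    simpa using tent_cont
  unfold Mnt
  simp only [Function.iterate_zero, id_eq]
  rw [← integral_add_adjacent_intervals (b := (1/2:ℝ))
    (hT.intervalIntegrable _ _) (hT.intervalIntegrable _ _)]
  have e1 : (∫ t in (0:ℝ)..(1/2), t^0 * tent t) = ∫ t in (0:ℝ)..(1/2), 2 * t := by
    apply integral_congr
    intro t ht
    rw [Set.uIcc_of_le (by norm_num : (0:ℝ) ≤ 1/2)] at ht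
    simp only [tent, pow_zero, one_mul]
    rw [if_pos ht.2]
  have e2 : (∫ t in (1/2:ℝ)..1, t^0 * tent t) = ∫ t in (1/2:ℝ)..1, (2 - 2 * t) := by
    apply integral_congr
    intro t ht
    rw [Set.uIcc_of_le (by norm_num : (1/2:ℝ) ≤ 1)] at ht
    simp only [tent, pow_zero, one_mul]
    split_ifs with h
    · have : t = 1/2 := le_antisymm h ht.1
      subst this; norm_num
    · ring
  rw [e1, e2]
  rw [intervalIntegral.integral_const_mul, integral_id]
  rw [integral_sub (intervalIntegrable_const)
      ((by fun_prop : Continuous fun t : ℝ => 2*t).intervalIntegrable _ _),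
    intervalIntegral.integral_const, intervalIntegral.integral_const_mul, integral_id]
  norm_num

lemma v10 : Mnt 1 0 = 0 := Mnt_rec0 0
lemma v20 : Mnt 2 0 = 0 := Mnt_rec0 1
lemma v30 : Mnt 3 0 = 0 := Mnt_rec0 2
lemma v40 : Mnt 4 0 = 0 := Mnt_rec0 3
lemma v50 : Mnt 5 0 = 0 := Mnt_rec0 4
lemma v11 : Mnt 1 1 = -(1/8) := by rw [Mnt_rec1 0, Mnt00]; norm_num
lemma v21 : Mnt 2 1 = 0 := by rw [Mnt_rec1 1, v10]; ring
lemma v31 : Mnt 3 1 = 0 := by rw [Mnt_rec1 2, v20]; ring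
lemma v41 : Mnt 4 1 = 0 := by rw [Mnt_rec1 3, v30]; ring
lemma v51 : Mnt 5 1 = 0 := by rw [Mnt_rec1 4, v40]; ring
lemma v22 : Mnt 2 2 = 1/32 := by rw [Mnt_rec2 1, v11, v10]; norm_num
lemma v32 : Mnt 3 2 = 0 := by rw [Mnt_rec2 2, v21, v20]; ring
lemma v42 : Mnt 4 2 = 0 := by rw [Mnt_rec2 3, v31, v30]; ring
lemma v52 : Mnt 5 2 = 0 := by rw [Mnt_rec2 4, v41, v40]; ring
lemma v33 : Mnt 3 3 = -(3/512) := by rw [Mnt_rec3 2, v22, v21, v20]; norm_num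
lemma v43 : Mnt 4 3 = 0 := by rw [Mnt_rec3 3, v32, v31, v30]; ring
lemma v53 : Mnt 5 3 = 0 := by rw [Mnt_rec3 4, v42, v41, v40]; ring
lemma v44 : Mnt 4 4 = 3/4096 := by rw [Mnt_rec4 3, v33, v32, v31, v30]; norm_num
lemma v54 : Mnt 5 4 = 0 := by rw [Mnt_rec4 4, v43, v42, v41, v40]; ring
lemma v55 : Mnt 5 5 = -(15/262144) := by
  rw [Mnt_rec5 4, v44, v43, v42, v41, v40]; norm_num
noncomputable def gg : ℝ → ℝ := Hop^[5] tent

lemma gg_cont : Continuous gg := (W_props 5).1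
lemma gg0 : gg 0 = 0 := (W_props 5).2.1
lemma gg1 : gg 1 = 0 := (W_props 5).2.2

noncomputable def AA (m : ℕ) (x : ℝ) : ℝ := ∫ t in (0:ℝ)..x, t^m * gg t

lemma AA_def (m : ℕ) (x : ℝ) : (∫ t in (0:ℝ)..x, t^m * gg t) = AA m x := rfl

lemma AA_one (m : ℕ) : AA m 1 = Mnt 5 m := rfl

lemma hA (m : ℕ) (x : ℝ) : HasDerivAt (AA m) (x^m * gg x) x :=
  ((((continuous_pow m).mul gg_cont)).integral_hasStrictDerivAt 0 x).hasDerivAt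

lemma Gexp5 (x : ℝ) : (∫ t in (0:ℝ)..x, (x - t)^5 * gg t)
    = x^5*AA 0 x - 5*(x^4*AA 1 x) + 10*(x^3*AA 2 x) - 10*(x^2*AA 3 x) + 5*(x*AA 4 x)
      - AA 5 x := by
  rw [show (∫ t in (0:ℝ)..x, (x - t)^5 * gg t)
      = ∫ t in (0:ℝ)..x, ((x^5)*t^0 + (-(5*x^4))*t^1 + (10*x^3)*t^2 + (-(10*x^2))*t^3
        + (5*x)*t^4 + (-1)*t^5) * gg t from integral_congr (fun t _ => by ring),
    comb gg_cont]
  simp only [AA_def]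
  ring

lemma Gexp4 (x : ℝ) : (∫ t in (0:ℝ)..x, (x - t)^4 * gg t)
    = x^4*AA 0 x - 4*(x^3*AA 1 x) + 6*(x^2*AA 2 x) - 4*(x*AA 3 x) + AA 4 x := by
  rw [show (∫ t in (0:ℝ)..x, (x - t)^4 * gg t)
      = ∫ t in (0:ℝ)..x, ((x^4)*t^0 + (-(4*x^3))*t^1 + (6*x^2)*t^2 + (-(4*x))*t^3
        + 1*t^4 + 0*t^5) * gg t from integral_congr (fun t _ => by ring),
    comb gg_cont]
  simp only [AA_def]
  ring

lemma Gexp3 (x : ℝ) : (∫ t in (0:ℝ)..x, (x - t)^3 * gg t)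
    = x^3*AA 0 x - 3*(x^2*AA 1 x) + 3*(x*AA 2 x) - AA 3 x := by
  rw [show (∫ t in (0:ℝ)..x, (x - t)^3 * gg t)
      = ∫ t in (0:ℝ)..x, ((x^3)*t^0 + (-(3*x^2))*t^1 + (3*x)*t^2 + (-1)*t^3
        + 0*t^4 + 0*t^5) * gg t from integral_congr (fun t _ => by ring),
    comb gg_cont]
  simp only [AA_def]
  ring

lemma Gexp2 (x : ℝ) : (∫ t in (0:ℝ)..x, (x - t)^2 * gg t)
    = x^2*AA 0 x - 2*(x*AA 1 x) + AA 2 x := by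
  rw [show (∫ t in (0:ℝ)..x, (x - t)^2 * gg t)
      = ∫ t in (0:ℝ)..x, ((x^2)*t^0 + (-(2*x))*t^1 + 1*t^2 + 0*t^3 + 0*t^4 + 0*t^5) * gg t
      from integral_congr (fun t _ => by ring), comb gg_cont]
  simp only [AA_def]
  ring

lemma Gexp1 (x : ℝ) : (∫ t in (0:ℝ)..x, (x - t) * gg t) = x*AA 0 x - AA 1 x := by
  rw [show (∫ t in (0:ℝ)..x, (x - t) * gg t)
      = ∫ t in (0:ℝ)..x, ((x)*t^0 + (-1)*t^1 + 0*t^2 + 0*t^3 + 0*t^4 + 0*t^5) * gg t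
      from integral_congr (fun t _ => by ring), comb gg_cont]
  simp only [AA_def]
  ring

noncomputable def D1 : ℝ → ℝ := fun x => (∫ t in (0:ℝ)..x, (x - t)^4 * gg t)/24
noncomputable def D2 : ℝ → ℝ := fun x => (∫ t in (0:ℝ)..x, (x - t)^3 * gg t)/6
noncomputable def D3 : ℝ → ℝ := fun x => (∫ t in (0:ℝ)..x, (x - t)^2 * gg t)/2
noncomputable def D4 : ℝ → ℝ := fun x => ∫ t in (0:ℝ)..x, (x - t) * gg t
noncomputable def D5 : ℝ → ℝ := fun x => ∫ t in (0:ℝ)..x, gg t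

lemma hFun_eq (x : ℝ) : hFun x = (1/120) * ∫ t in (0:ℝ)..x, (x - t)^5 * gg t := by
  unfold hFun
  rw [← intervalIntegral.integral_const_mul]
  apply integral_congr
  intro t _
  show ((x - t)^5/120) * gg t = (1/120) * ((x - t)^5 * gg t)
  ring

lemma eE5 : hFun = fun x => (1/120) * (x^5*AA 0 x - 5*(x^4*AA 1 x) + 10*(x^3*AA 2 x)
    - 10*(x^2*AA 3 x) + 5*(x*AA 4 x) - AA 5 x) :=
  funext fun x => by rw [hFun_eq x, Gexp5 x]

lemma eE4 : D1 = fun x => (x^4*AA 0 x - 4*(x^3*AA 1 x) + 6*(x^2*AA 2 x) - 4*(x*AA 3 x)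
    + AA 4 x)/24 := funext fun x => by simp only [D1]; rw [Gexp4 x]

lemma eE3 : D2 = fun x => (x^3*AA 0 x - 3*(x^2*AA 1 x) + 3*(x*AA 2 x) - AA 3 x)/6 :=
  funext fun x => by simp only [D2]; rw [Gexp3 x]

lemma eE2 : D3 = fun x => (x^2*AA 0 x - 2*(x*AA 1 x) + AA 2 x)/2 :=
  funext fun x => by simp only [D3]; rw [Gexp2 x]

lemma eE1 : D4 = fun x => x*AA 0 x - AA 1 x :=
  funext fun x => by simp only [D4]; rw [Gexp1 x]

lemma eE0 : D5 = fun x => AA 0 x :=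
  funext fun x => (integral_congr (fun t _ => by simp)).symm

lemma hd1 (x : ℝ) : HasDerivAt hFun (D1 x) x := by
  rw [eE5]
  have H := ((((((hasDerivAt_pow 5 x).mul (hA 0 x)).sub
      (((hasDerivAt_pow 4 x).mul (hA 1 x)).const_mul 5)).add
      (((hasDerivAt_pow 3 x).mul (hA 2 x)).const_mul 10)).sub
      (((hasDerivAt_pow 2 x).mul (hA 3 x)).const_mul 10)).add
      (((hasDerivAt_id x).mul (hA 4 x)).const_mul 5)).sub (hA 5 x) |>.const_mul (1/120)
  convert H using 1
  case e'_4 => rfl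
  case e'_5 => rfl
  · rfl
  rw [show D1 x = (x^4*AA 0 x - 4*(x^3*AA 1 x) + 6*(x^2*AA 2 x) - 4*(x*AA 3 x) + AA 4 x)/24
    from by simp only [D1]; rw [Gexp4 x]]
  norm_num
  ring

lemma hd2 (x : ℝ) : HasDerivAt D1 (D2 x) x := by
  rw [eE4]
  have H := (((((hasDerivAt_pow 4 x).mul (hA 0 x)).sub
      (((hasDerivAt_pow 3 x).mul (hA 1 x)).const_mul 4)).add
      (((hasDerivAt_pow 2 x).mul (hA 2 x)).const_mul 6)).sub
      (((hasDerivAt_id x).mul (hA 3 x)).const_mul 4)).add (hA 4 x) |>.div_const 24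
  convert H using 1
  case e'_4 => rfl
  case e'_5 => rfl
  · rfl
  rw [show D2 x = (x^3*AA 0 x - 3*(x^2*AA 1 x) + 3*(x*AA 2 x) - AA 3 x)/6
    from by simp only [D2]; rw [Gexp3 x]]
  norm_num
  ring

lemma hd3 (x : ℝ) : HasDerivAt D2 (D3 x) x := by
  rw [eE3]
  have H := ((((hasDerivAt_pow 3 x).mul (hA 0 x)).sub
      (((hasDerivAt_pow 2 x).mul (hA 1 x)).const_mul 3)).add
      (((hasDerivAt_id x).mul (hA 2 x)).const_mul 3)).sub (hA 3 x) |>.div_const 6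
  convert H using 1
  case e'_4 => rfl
  case e'_5 => rfl
  · rfl
  rw [show D3 x = (x^2*AA 0 x - 2*(x*AA 1 x) + AA 2 x)/2
    from by simp only [D3]; rw [Gexp2 x]]
  norm_num
  ring

lemma hd4 (x : ℝ) : HasDerivAt D3 (D4 x) x := by
  rw [eE2]
  have H := (((hasDerivAt_pow 2 x).mul (hA 0 x)).sub
      (((hasDerivAt_id x).mul (hA 1 x)).const_mul 2)).add (hA 2 x) |>.div_const 2
  convert H using 1
  case e'_4 => rfl
  case e'_5 => rfl
  · rfl
  rw [show D4 x = x*AA 0 x - AA 1 x from by simp only [D4]; rw [Gexp1 x]]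
  norm_num
  ring

lemma hd5 (x : ℝ) : HasDerivAt D4 (D5 x) x := by
  rw [eE1]
  have H := ((hasDerivAt_id x).mul (hA 0 x)).sub (hA 1 x)
  convert H using 1
  case e'_4 => rfl
  case e'_5 => rfl
  · rfl
  rw [show D5 x = AA 0 x from congrFun eE0 x]
  norm_num

lemma hd6 (x : ℝ) : HasDerivAt D5 (gg x) x :=
  (gg_cont.integral_hasStrictDerivAt 0 x).hasDerivAt
lemma step {f Df : ℝ → ℝ} {n : ℕ} (h : ∀ x, HasDerivAt f (Df x) x)
    (hD : ContDiff ℝ (n : WithTop ℕ∞) Df) : ContDiff ℝ ((n+1 : ℕ) : WithTop ℕ∞) f := by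
  have hderiv : deriv f = Df := funext fun x => (h x).deriv
  have : ((n+1 : ℕ) : WithTop ℕ∞) = (n : WithTop ℕ∞) + 1 := by push_cast; rfl
  rw [this]
  refine contDiff_succ_iff_deriv.mpr ⟨fun x => (h x).differentiableAt, ?_, by
    rw [hderiv]; exact hD⟩
  intro hn
  exact absurd hn (by simp)

lemma cD5 : ContDiff ℝ ((1:ℕ) : WithTop ℕ∞) D5 := step hd6 (contDiff_zero.mpr gg_cont)
lemma cD4 : ContDiff ℝ ((2:ℕ) : WithTop ℕ∞) D4 := step hd5 cD5
lemma cD3 : ContDiff ℝ ((3:ℕ) : WithTop ℕ∞) D3 := step hd4 cD4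
lemma cD2 : ContDiff ℝ ((4:ℕ) : WithTop ℕ∞) D2 := step hd3 cD3
lemma cD1 : ContDiff ℝ ((5:ℕ) : WithTop ℕ∞) D1 := step hd2 cD2
lemma chFun : ContDiff ℝ ((6:ℕ) : WithTop ℕ∞) hFun := step hd1 cD1

lemma iter1 : iteratedDeriv 1 hFun = D1 := by
  rw [iteratedDeriv_one]; exact funext fun x => (hd1 x).deriv
lemma iter2 : iteratedDeriv 2 hFun = D2 := by
  rw [show (2:ℕ) = 1+1 from rfl, iteratedDeriv_succ, iter1]
  exact funext fun x => (hd2 x).deriv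
lemma iter3 : iteratedDeriv 3 hFun = D3 := by
  rw [show (3:ℕ) = 2+1 from rfl, iteratedDeriv_succ, iter2]
  exact funext fun x => (hd3 x).deriv
lemma iter4 : iteratedDeriv 4 hFun = D4 := by
  rw [show (4:ℕ) = 3+1 from rfl, iteratedDeriv_succ, iter3]
  exact funext fun x => (hd4 x).deriv
lemma iter5 : iteratedDeriv 5 hFun = D5 := by
  rw [show (5:ℕ) = 4+1 from rfl, iteratedDeriv_succ, iter4]
  exact funext fun x => (hd5 x).deriv
lemma iter6 : iteratedDeriv 6 hFun = gg := by
  rw [show (6:ℕ) = 5+1 from rfl, iteratedDeriv_succ, iter5]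
  exact funext fun x => (hd6 x).deriv

lemma D1_one : D1 1 = 0 := by
  have : D1 1 = (1^4*AA 0 1 - 4*(1^3*AA 1 1) + 6*(1^2*AA 2 1) - 4*(1*AA 3 1) + AA 4 1)/24 := by
    simp only [D1]; rw [Gexp4 1]
  rw [this, AA_one, AA_one, AA_one, AA_one, AA_one, v50, v51, v52, v53, v54]
  norm_num

lemma D2_one : D2 1 = 0 := by
  have : D2 1 = (1^3*AA 0 1 - 3*(1^2*AA 1 1) + 3*(1*AA 2 1) - AA 3 1)/6 := by
    simp only [D2]; rw [Gexp3 1]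
  rw [this, AA_one, AA_one, AA_one, AA_one, v50, v51, v52, v53]
  norm_num

lemma D3_one : D3 1 = 0 := by
  have : D3 1 = (1^2*AA 0 1 - 2*(1*AA 1 1) + AA 2 1)/2 := by
    simp only [D3]; rw [Gexp2 1]
  rw [this, AA_one, AA_one, AA_one, v50, v51, v52]
  norm_num

lemma D4_one : D4 1 = 0 := by
  have : D4 1 = 1*AA 0 1 - AA 1 1 := by simp only [D4]; rw [Gexp1 1]
  rw [this, AA_one, AA_one, v50, v51]
  norm_num

lemma D5_one : D5 1 = 0 := by
  have : D5 1 = AA 0 1 := congrFun eE0 1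
  rw [this, AA_one, v50]

/-- `h` is `C⁶` on `[0,1]`, its derivatives of order `1 ≤ j ≤ 6` vanish at
`1`, and `h(1) = 2⁻²¹`. -/
theorem stmt8 :
    ContDiffOn ℝ 6 hFun (Set.Icc 0 1) ∧
    (∀ j : ℕ, 1 ≤ j → j ≤ 6 → iteratedDerivWithin j hFun (Set.Icc 0 1) 1 = 0) ∧
    hFun 1 = (2 : ℝ) ^ (-21 : ℤ) := by
  have hC : ContDiff ℝ 6 hFun := by exact_mod_cast chFun
  have hC' : ContDiff ℝ ((6:ℕ∞) : WithTop ℕ∞) hFun := by exact_mod_cast chFun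
  refine ⟨hC.contDiffOn, ?_, ?_⟩
  · intro j hj1 hj6
    have hEq : iteratedDerivWithin j hFun (Set.Icc 0 1) 1 = iteratedDeriv j hFun 1 := by
      have h := ((contDiff_iff_ftaylorSeries.mp hC').hasFTaylorSeriesUpToOn
          (Set.Icc (0:ℝ) 1)).eq_iteratedFDerivWithin_of_uniqueDiffOn
          (m := j) (by exact_mod_cast hj6) (uniqueDiffOn_Icc one_pos)
          (by norm_num : (1:ℝ) ∈ Set.Icc (0:ℝ) 1)
      rw [iteratedDerivWithin_eq_iteratedFDerivWithin, iteratedDeriv_eq_iteratedFDeriv, ← h]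
      rfl
    rw [hEq]
    interval_cases j
    · rw [iter1]; exact D1_one
    · rw [iter2]; exact D2_one
    · rw [iter3]; exact D3_one
    · rw [iter4]; exact D4_one
    · rw [iter5]; exact D5_one
    · rw [iter6]; exact gg1
  · rw [show hFun 1 = (1/120) * (1^5*AA 0 1 - 5*(1^4*AA 1 1) + 10*(1^3*AA 2 1)
        - 10*(1^2*AA 3 1) + 5*(1*AA 4 1) - AA 5 1) from by rw [hFun_eq 1, Gexp5 1],
      AA_one, AA_one, AA_one, AA_one, AA_one, AA_one, v50, v51, v52, v53, v54, v55]
    norm_num
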